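/- Let G be a simple connected graph with closed neighborhood ideal N_G. Let D be a minimal dominating set of G and let U ⊆ P_N(D) be a set of external and self-private neighbors of D that dominates D (i.e., D ⊆ N[U]). Then the colon ideal (N_G : t_{N[U]∖D}) equals the prime ideal ⟨D⟩ generated by the variables indexed by the vertices of D. -/
import Mathlib


open Finset MvPolynomial

noncomputable section
open scoped Classical

variable {V : Type*}

/-- The closed neighborhood of a vertex, as a finite set. -/
def closedNbhd [Fintype V] (G : SimpleGraph V) (v : V) : Finset V :=
  Finset.univ.filter fun u => u = v ∨ G.Adj v u

/-- The closed neighborhood of a set of vertices. -/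
def closedNbhdSet [Fintype V] (G : SimpleGraph V) (A : Finset V) : Finset V :=
  A.biUnion (closedNbhd G)

/-- A dominating set of a graph. -/
def IsDominatingSet [Fintype V] (G : SimpleGraph V) (D : Finset V) : Prop :=
  ∀ v : V, ∃ u ∈ D, v ∈ closedNbhd G u

/-- A minimal dominating set: dominating, and no proper subset dominates. -/
def IsMinimalDominatingSet [Fintype V] (G : SimpleGraph V) (D : Finset V) : Prop :=
  IsDominatingSet G D ∧ ∀ D' ⊂ D, ¬ IsDominatingSet G D'

/-- The set of external and self-private neighbors of D: the vertices whose
closed neighborhood meets D in exactly one vertex. -/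
def privateNbrs [Fintype V] (G : SimpleGraph V) (D : Finset V) : Finset V :=
  Finset.univ.filter fun v => (closedNbhd G v ∩ D).card = 1

/-- The closed neighborhood ideal of a graph, in the polynomial ring over K with
one variable for each vertex. -/
def cnIdeal (K : Type*) [Field K] [Fintype V] (G : SimpleGraph V) :
    Ideal (MvPolynomial V K) :=
  Ideal.span (Set.range fun v => ∏ u ∈ closedNbhd G v, X u)

/-- The ideal generated by the variables indexed by a set of vertices D. -/
def vertexIdeal (K : Type*) [Field K] (D : Finset V) : Ideal (MvPolynomial V K) :=
  Ideal.span ((fun v => (X v : MvPolynomial V K)) '' ↑D)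

/-- The v-number of a graded ideal: the least degree d of a homogeneous polynomial f
such that the colon ideal (I : f) is an associated prime of S/I. -/
def vNumber {K : Type*} [Field K] (I : Ideal (MvPolynomial V K)) : ℕ :=
  sInf {d : ℕ | ∃ f : MvPolynomial V K, f.IsHomogeneous d ∧
    Submodule.colon I (Ideal.span {f}) ∈
      associatedPrimes (MvPolynomial V K) (MvPolynomial V K ⧸ I)}

end


section
variable {V : Type*} [Fintype V] [DecidableEq V] (K : Type*) [Field K]

lemma sub_aeval_mem (D : Finset V) (p : MvPolynomial V K) :
    p - aeval (fun v => if v ∈ D then 0 else X v) p ∈ vertexIdeal K D := by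
  induction p using MvPolynomial.induction_on with
  | C a => simp
  | add p q hp hq =>
      rw [map_add]
      have h := add_mem hp hq
      convert h using 1; ring
  | mul_X p v hp =>
      rw [map_mul, aeval_X]
      by_cases hv : v ∈ D
      · rw [if_pos hv, mul_zero, sub_zero]
        exact Ideal.mul_mem_left _ p (Ideal.subset_span ⟨v, hv, rfl⟩)
      · rw [if_neg hv]
        have h2 : p * X v - aeval (fun v => if v ∈ D then 0 else X v) p * X v
            = (p - aeval (fun v => if v ∈ D then 0 else X v) p) * X v := by ring
        rw [h2]
        exact Ideal.mul_mem_right _ _ hp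

lemma mem_closedNbhd_comm (G : SimpleGraph V) {u v : V} :
    u ∈ closedNbhd G v ↔ v ∈ closedNbhd G u := by
  simp only [closedNbhd, Finset.mem_filter, Finset.mem_univ, true_and]
  constructor
  · rintro (rfl | h); exact Or.inl rfl; exact Or.inr h.symm
  · rintro (rfl | h); exact Or.inl rfl; exact Or.inr h.symm

end

/-- If D is a minimal dominating set and U ⊆ P_N(D) dominates D, then the colon ideal
(N_G : t_{N[U] \ D}) equals the ideal of variables indexed by D. -/
theorem colon_of_private_dominating {V : Type*} [Fintype V] [DecidableEq V]
    (K : Type*) [Field K] (G : SimpleGraph V) (hG : G.Connected) (D U : Finset V)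
    (hD : IsMinimalDominatingSet G D) (hU : U ⊆ privateNbrs G D)
    (hdom : D ⊆ closedNbhdSet G U) :
    Submodule.colon (cnIdeal K G)
        (Ideal.span {∏ v ∈ closedNbhdSet G U \ D, (X v : MvPolynomial V K)}) =
      vertexIdeal K D := by
  classical
  set f : MvPolynomial V K := ∏ v ∈ closedNbhdSet G U \ D, (X v : MvPolynomial V K) with hf
  set ψ : MvPolynomial V K →ₐ[K] MvPolynomial V K :=
    aeval (fun v => if v ∈ D then 0 else X v) with hψ
  have hψf : ψ f = f := by
    rw [hf, map_prod]
    refine Finset.prod_congr rfl fun v hv => ?_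
    rw [Finset.mem_sdiff] at hv
    simp [hψ, hv.2]
  have hfne : f ≠ 0 := by
    rw [hf]
    refine Finset.prod_ne_zero_iff.2 fun v _ => X_ne_zero v
  apply le_antisymm
  · -- colon ⊆ vertexIdeal
    intro g hg
    have hgf : g * f ∈ cnIdeal K G := by
      have := Submodule.mem_colon.1 hg f (Ideal.subset_span rfl)
      simpa [smul_eq_mul] using this
    -- apply ψ
    have hmap : ψ (g * f) ∈ Ideal.map (ψ : MvPolynomial V K →+* MvPolynomial V K)
        (cnIdeal K G) := Ideal.mem_map_of_mem _ hgf
    have hbot : Ideal.map (ψ : MvPolynomial V K →+* MvPolynomial V K) (cnIdeal K G) = ⊥ := by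
      rw [cnIdeal, Ideal.map_span]
      refine le_antisymm (Ideal.span_le.2 ?_) bot_le
      rintro x ⟨y, ⟨w, rfl⟩, rfl⟩
      obtain ⟨d, hdD, hd⟩ := hD.1 w
      have hdw : d ∈ closedNbhd G w := (mem_closedNbhd_comm G).1 hd
      simp only [SetLike.mem_coe, Ideal.mem_bot]
      rw [map_prod]
      refine Finset.prod_eq_zero hdw ?_
      simp [hψ, hdD]
    rw [hbot, Ideal.mem_bot, map_mul, hψf] at hmap
    have hψg : ψ g = 0 := by
      rcases mul_eq_zero.1 hmap with h | h
      · exact h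
      · exact absurd h hfne
    have hsub := sub_aeval_mem K D g
    rwa [show (aeval fun v => if v ∈ D then 0 else X v) g = ψ g from rfl,
      hψg, sub_zero] at hsub
  · -- vertexIdeal ⊆ colon
    rw [vertexIdeal, Ideal.span_le]
    rintro x ⟨d, hdD, rfl⟩
    simp only [SetLike.mem_coe]
    rw [Ideal.mem_colon_span_singleton]
    have hdU := hdom hdD
    simp only [closedNbhdSet, Finset.mem_biUnion] at hdU
    obtain ⟨u, huU, hdu⟩ := hdU
    have h := hU huU
    rw [privateNbrs, Finset.mem_filter] at h
    obtain ⟨a, ha⟩ := Finset.card_eq_one.1 h.2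
    have hda : d = a := by
      have hd : d ∈ ({a} : Finset V) := by
        rw [← ha]; simp only [Finset.mem_inter]; exact ⟨hdu, hdD⟩
      simpa using hd
    have hsub : closedNbhd G u ⊆ insert d (closedNbhdSet G U \ D) := by
      intro w hw
      by_cases hwD : w ∈ D
      · have hw' : w ∈ ({a} : Finset V) := by
          rw [← ha]; simp only [Finset.mem_inter]; exact ⟨hw, hwD⟩
        rw [Finset.mem_singleton] at hw'
        exact Finset.mem_insert.2 (Or.inl (hw'.trans hda.symm))
      · refine Finset.mem_insert.2 (Or.inr (Finset.mem_sdiff.2 ⟨?_, hwD⟩))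
        simp only [closedNbhdSet, Finset.mem_biUnion]
        exact ⟨u, huU, hw⟩
    have hdvd : (∏ w ∈ closedNbhd G u, (X w : MvPolynomial V K)) ∣ X d * f := by
      have hdnot : d ∉ closedNbhdSet G U \ D := fun h => (Finset.mem_sdiff.1 h).2 hdD
      rw [hf, ← Finset.prod_insert hdnot]
      exact Finset.prod_dvd_prod_of_subset _ _ _ hsub
    obtain ⟨c, hc⟩ := hdvd
    rw [hc]
    exact Ideal.mul_mem_right _ _ (Ideal.subset_span ⟨u, rfl⟩)
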